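/- Fix N ≥ 2 and a finite connected simple graph G. If c(G) > N−1, then there exists a noncapture state s of the CR-pregame Γ̆_N(G) with c(G|s) = ∞; conversely, if some noncapture state s has c(G|s) = ∞, then c(G) > N−1. -/

import Mathlib

open scoped Classical

/-- A state of the CR-pregame `Γ̆_N(G)` with `c` cop tokens and one robber token:
the positions of the cops, the position of the robber, and whose turn it is
(turn `Fin.last c` is the robber's turn, turn `i < c` is cop `Cᵢ`'s turn). -/
structure PGState (V : Type) (c : ℕ) where
  cop : Fin c → V
  rob : V
  turn : Fin (c + 1)

namespace PGState

variable {V : Type} [Fintype V] [DecidableEq V] {c : ℕ}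

/-- No cop occupies the robber's vertex. -/
def NonCapture (s : PGState V c) : Prop := ∀ i : Fin c, s.cop i ≠ s.rob

/-- Some cop occupies the robber's vertex. -/
def Capture (s : PGState V c) : Prop := ∃ i : Fin c, s.cop i = s.rob

/-- A legal single-token move: stay in place or move along an edge of `G`. -/
def adjStay (G : SimpleGraph V) (u v : V) : Prop := u = v ∨ G.Adj u v

/-- One turn of the pregame: the token whose turn it is makes a legal move, all other
tokens stay put, and the turn passes cyclically along `C₁, ..., C_c, R, C₁, ...`. -/
def Step (G : SimpleGraph V) (s s' : PGState V c) : Prop :=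
  s'.turn = s.turn + 1 ∧
  (if h : (s.turn : ℕ) < c then
      adjStay G (s.cop ⟨(s.turn : ℕ), h⟩) (s'.cop ⟨(s.turn : ℕ), h⟩) ∧ s'.rob = s.rob ∧
        ∀ j : Fin c, j ≠ ⟨(s.turn : ℕ), h⟩ → s'.cop j = s.cop j
    else adjStay G s.rob s'.rob ∧ ∀ j : Fin c, s'.cop j = s.cop j)

/-- An infinite play of the pregame starting from state `s`. -/
def IsPlay (G : SimpleGraph V) (s : PGState V c) (f : ℕ → PGState V c) : Prop :=
  f 0 = s ∧ ∀ t, Step G (f t) (f (t + 1))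

/-- The history of a play up to (and including) time `t`. -/
def hist (f : ℕ → PGState V c) (t : ℕ) : List (PGState V c) :=
  (List.range (t + 1)).map f

/-- The play `f` is consistent with the (history-dependent) strategies `σ` of the cops
in the set `A`: whenever it is the turn of a cop in `A`, his move is the one
prescribed by his strategy applied to the current history. -/
def Consistent (A : Finset (Fin c)) (σ : Fin c → List (PGState V c) → V)
    (f : ℕ → PGState V c) : Prop :=
  ∀ t, ∀ h : ((f t).turn : ℕ) < c, (⟨((f t).turn : ℕ), h⟩ : Fin c) ∈ A →
    (f (t + 1)).cop ⟨((f t).turn : ℕ), h⟩ = σ ⟨((f t).turn : ℕ), h⟩ (hist f t)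

/-- `σ` is an `s`-guaranteed capture profile for the cops in `A`: every play from `s`
consistent with `σ` reaches a capture state, no matter how the remaining tokens
(including the robber) play. -/
def IsGCP (G : SimpleGraph V) (A : Finset (Fin c))
    (σ : Fin c → List (PGState V c) → V) (s : PGState V c) : Prop :=
  ∀ f : ℕ → PGState V c, IsPlay G s f → Consistent A σ f → ∃ t, Capture (f t)

/-- The state cop number `c(G|s)`: the minimum cardinality of a nonempty set of cops
admitting an `s`-guaranteed capture profile; `⊤` (i.e. `∞`) if there is none. -/
noncomputable def stateCopNum (G : SimpleGraph V) (s : PGState V c) : ℕ∞ :=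
  sInf ((fun A : Finset (Fin c) => (A.card : ℕ∞)) ''
    {A | A.Nonempty ∧ ∃ σ, IsGCP G A σ s})

/-- The classic cop number `c(G)` (in the turn-based pregame formulation of the paper):
the minimum number `k` of cops which guarantee capture from every noncapture state. -/
noncomputable def copNumber (G : SimpleGraph V) : ℕ∞ :=
  sInf ((fun k : ℕ => (k : ℕ∞)) ''
    {k | ∀ s : PGState V k, NonCapture s → ∃ σ, IsGCP G Finset.univ σ s})

/-- Cop `C_m`, using strategy `σ`, himself effects the capture starting from `s`, no
matter how all the remaining tokens play. -/
def ForcesCapBy (G : SimpleGraph V) (m : Fin c)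
    (σ : List (PGState V c) → V) (s : PGState V c) : Prop :=
  ∀ f : ℕ → PGState V c, IsPlay G s f → Consistent {m} (fun _ => σ) f →
    ∃ t, (f t).cop m = (f t).rob

end PGState

namespace PGState

section Sim

set_option linter.unusedSectionVars false

variable {V : Type} [Fintype V] [DecidableEq V] {G : SimpleGraph V} {c k : ℕ}

lemma pg_ext {s t : PGState V c} (h1 : s.cop = t.cop) (h2 : s.rob = t.rob)
    (h3 : s.turn = t.turn) : s = t := by
  cases s; cases t; simp_all

/-- Projection of a big state to a small state. -/
noncomputable def gmap (hkc : k ≤ c) (s : PGState V c) : PGState V k where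
  cop := fun i => s.cop (Fin.castLE hkc i)
  rob := s.rob
  turn := ⟨min (s.turn : ℕ) k, Nat.lt_succ_of_le (min_le_right _ _)⟩

@[simp] lemma gmap_cop (hkc : k ≤ c) (s : PGState V c) (i : Fin k) :
    (gmap hkc s).cop i = s.cop (Fin.castLE hkc i) := rfl

@[simp] lemma gmap_rob (hkc : k ≤ c) (s : PGState V c) : (gmap hkc s).rob = s.rob := rfl

@[simp] lemma gmap_turn_val (hkc : k ≤ c) (s : PGState V c) :
    ((gmap hkc s).turn : ℕ) = min (s.turn : ℕ) k := rfl

/-- A time is "relevant" if the token moving is one of the first `k` cops or the robber. -/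
def SimRel (k : ℕ) (f : ℕ → PGState V c) (t : ℕ) : Prop :=
  ((f t).turn : ℕ) < k ∨ ((f t).turn : ℕ) = c

/-- Next relevant time (weakly) after `t`. -/
noncomputable def simNxt (k : ℕ) (f : ℕ → PGState V c) (t : ℕ) : ℕ :=
  if k ≤ ((f t).turn : ℕ) ∧ ((f t).turn : ℕ) < c then t + (c - ((f t).turn : ℕ)) else t

/-- Enumeration of the relevant times. -/
noncomputable def simPsi (k : ℕ) (f : ℕ → PGState V c) : ℕ → ℕ
  | 0 => simNxt k f 0
  | n + 1 => simNxt k f (simPsi k f n + 1)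

/-- Number of relevant times `< t`. -/
noncomputable def simN (k : ℕ) (f : ℕ → PGState V c) (t : ℕ) : ℕ :=
  ((Finset.range t).filter (SimRel k f)).card

/-- Remove consecutive duplicates. -/
noncomputable def ddup {α : Type} : List α → List α
  | [] => []
  | [a] => [a]
  | a :: b :: l => if a = b then ddup (b :: l) else a :: ddup (b :: l)

variable {f : ℕ → PGState V c}

lemma turn_le (t : ℕ) : ((f t).turn : ℕ) ≤ c := Nat.lt_succ_iff.mp (f t).turn.isLt

lemma turn_succ (hstep : ∀ t, Step G (f t) (f (t + 1))) (t : ℕ)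
    (h : ((f t).turn : ℕ) < c) : ((f (t + 1)).turn : ℕ) = ((f t).turn : ℕ) + 1 := by
  have h1 := (hstep t).1
  rw [h1, Fin.val_add_one, if_neg]
  intro he
  rw [he] at h
  simp [Fin.last] at h

lemma turn_succ' (hstep : ∀ t, Step G (f t) (f (t + 1))) (t : ℕ)
    (h : ((f t).turn : ℕ) = c) : ((f (t + 1)).turn : ℕ) = 0 := by
  have h1 := (hstep t).1
  have he : (f t).turn = Fin.last c := by
    apply Fin.ext; simpa [Fin.last] using h
  rw [h1, he]
  simp

lemma turn_add (hstep : ∀ t, Step G (f t) (f (t + 1))) (t : ℕ) :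
    ∀ e, ((f t).turn : ℕ) + e ≤ c → ((f (t + e)).turn : ℕ) = ((f t).turn : ℕ) + e := by
  intro e
  induction e with
  | zero => simp
  | succ e ih =>
    intro h
    have h1 : ((f (t + e)).turn : ℕ) = ((f t).turn : ℕ) + e := ih (by omega)
    have h2 : ((f (t + e)).turn : ℕ) < c := by omega
    have h3 := turn_succ hstep (t + e) h2
    have h4 : ((f (t + e + 1)).turn : ℕ) = ((f t).turn : ℕ) + e + 1 := by omega
    simpa [Nat.add_assoc] using h4

/-- On an irrelevant step the small state does not change. -/
lemma gmap_const (hstep : ∀ t, Step G (f t) (f (t + 1))) (hkc : k ≤ c) (t : ℕ)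
    (h : ¬ SimRel k f t) : gmap hkc (f (t + 1)) = gmap hkc (f t) := by
  rw [SimRel] at h
  push_neg at h
  obtain ⟨hk, hc⟩ := h
  have hc' : ((f t).turn : ℕ) < c := lt_of_le_of_ne (turn_le t) hc
  have hst := (hstep t).2
  rw [dif_pos hc'] at hst
  obtain ⟨_, hrob, hoth⟩ := hst
  refine pg_ext ?_ ?_ ?_
  · funext i
    simp only [gmap_cop]
    exact hoth (Fin.castLE hkc i) (by
      intro he
      have hv : (i : ℕ) = ((f t).turn : ℕ) := by
        simpa using congrArg Fin.val he
      omega)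
  · exact hrob
  · apply Fin.ext
    have h3 := turn_succ hstep t hc'
    simp only [gmap_turn_val]
    omega

/-- On a relevant step the small states make a legal step. -/
lemma gmap_step (hstep : ∀ t, Step G (f t) (f (t + 1))) (hk1 : 1 ≤ k) (hkc : k ≤ c)
    (t : ℕ) (h : SimRel k f t) :
    Step G (gmap hkc (f t)) (gmap hkc (f (t + 1))) := by
  rcases h with h | h
  · -- cop `i < k` moves
    have hc' : ((f t).turn : ℕ) < c := lt_of_lt_of_le h hkc
    have hst := (hstep t).2
    rw [dif_pos hc'] at hst
    obtain ⟨hmov, hrob, hoth⟩ := hst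
    have hmin : min ((f t).turn : ℕ) k = ((f t).turn : ℕ) := by omega
    have ht1 := turn_succ hstep t hc'
    constructor
    · apply Fin.ext
      rw [Fin.val_add_one, if_neg]
      · simp only [gmap_turn_val, ht1]; omega
      · intro he
        have hv := congrArg Fin.val he
        simp [Fin.last, hmin] at hv
        omega
    · rw [dif_pos (show ((gmap hkc (f t)).turn : ℕ) < k by simp only [gmap_turn_val]; omega)]
      have hidx : ∀ hh : ((gmap hkc (f t)).turn : ℕ) < k,
          Fin.castLE hkc (⟨((gmap hkc (f t)).turn : ℕ), hh⟩ : Fin k)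
            = (⟨((f t).turn : ℕ), hc'⟩ : Fin c) := by
        intro hh; apply Fin.ext; simp [hmin]
      refine ⟨?_, hrob, ?_⟩
      · simp only [gmap_cop, hidx]
        exact hmov
      · intro j hj
        simp only [gmap_cop]
        apply hoth
        intro he
        apply hj
        apply Fin.ext
        have hv := congrArg Fin.val he
        simp only [Fin.coe_castLE] at hv
        simp [hv, hmin]
  · -- robber moves
    have hc' : ¬ ((f t).turn : ℕ) < c := by omega
    have hst := (hstep t).2
    rw [dif_neg hc'] at hst
    obtain ⟨hmov, hoth⟩ := hst
    have hmin : min ((f t).turn : ℕ) k = k := by omega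
    have ht1 := turn_succ' hstep t h
    constructor
    · have hlast : (gmap hkc (f t)).turn = Fin.last k := by
        apply Fin.ext; simp [Fin.last, hmin]
      rw [hlast]
      apply Fin.ext
      simp [ht1]
    · rw [dif_neg (by simp only [gmap_turn_val]; omega)]
      exact ⟨hmov, fun j => hoth _⟩

lemma le_simNxt (t : ℕ) : t ≤ simNxt k f t := by
  rw [simNxt]; split <;> omega

lemma simNxt_of_rel (t : ℕ) (h : SimRel k f t) : simNxt k f t = t := by
  rw [simNxt, if_neg]
  rcases h with h | h <;> omega

lemma simNxt_rel (hstep : ∀ t, Step G (f t) (f (t + 1))) (t : ℕ) :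
    SimRel k f (simNxt k f t) := by
  by_cases h : SimRel k f t
  · rwa [simNxt_of_rel t h]
  · rw [SimRel] at h; push_neg at h
    obtain ⟨hk, hc⟩ := h
    have hc' : ((f t).turn : ℕ) < c := lt_of_le_of_ne (turn_le t) hc
    rw [simNxt, if_pos ⟨hk, hc'⟩]
    right
    rw [turn_add hstep t (c - ((f t).turn : ℕ)) (by omega)]
    omega

lemma not_rel_between (hstep : ∀ t, Step G (f t) (f (t + 1))) {t x : ℕ}
    (h1 : t ≤ x) (h2 : x < simNxt k f t) : ¬ SimRel k f x := by
  by_cases h : SimRel k f t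
  · rw [simNxt_of_rel t h] at h2; omega
  · rw [SimRel] at h; push_neg at h
    obtain ⟨hk, hc⟩ := h
    have hc' : ((f t).turn : ℕ) < c := lt_of_le_of_ne (turn_le t) hc
    rw [simNxt, if_pos ⟨hk, hc'⟩] at h2
    have hx : ((f (t + (x - t))).turn : ℕ) = ((f t).turn : ℕ) + (x - t) :=
      turn_add hstep t (x - t) (by omega)
    have hxt : t + (x - t) = x := by omega
    rw [hxt] at hx
    rw [SimRel]
    push_neg
    omega

lemma gmap_const_upto (hstep : ∀ t, Step G (f t) (f (t + 1))) (hkc : k ≤ c) (t : ℕ) :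
    ∀ x, t ≤ x → x ≤ simNxt k f t → gmap hkc (f x) = gmap hkc (f t) := by
  intro x
  induction x with
  | zero =>
    intro h1 _
    obtain rfl : t = 0 := by omega
    rfl
  | succ x ih =>
    intro h1 h2
    rcases Nat.lt_or_ge x t with h | h
    · obtain rfl : t = x + 1 := by omega
      rfl
    · rw [gmap_const hstep hkc x (not_rel_between hstep h (by omega))]
      exact ih h (by omega)

lemma simNxt_shift (hstep : ∀ t, Step G (f t) (f (t + 1))) (t : ℕ)
    (h : ¬ SimRel k f t) : simNxt k f (t + 1) = simNxt k f t := by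
  rw [SimRel] at h; push_neg at h
  obtain ⟨hk, hc⟩ := h
  have hc' : ((f t).turn : ℕ) < c := lt_of_le_of_ne (turn_le t) hc
  have ht1 := turn_succ hstep t hc'
  simp only [simNxt]
  by_cases h2 : ((f (t + 1)).turn : ℕ) < c
  · rw [if_pos ⟨by omega, h2⟩, if_pos ⟨hk, hc'⟩]; omega
  · rw [if_neg (fun hcon => h2 hcon.2), if_pos ⟨hk, hc'⟩]; omega

lemma simPsi_rel (hstep : ∀ t, Step G (f t) (f (t + 1))) (n : ℕ) :
    SimRel k f (simPsi k f n) := by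
  cases n <;> exact simNxt_rel hstep _

lemma simPsi_lt (n : ℕ) : simPsi k f n < simPsi k f (n + 1) := by
  have h1 : simPsi k f (n + 1) = simNxt k f (simPsi k f n + 1) := rfl
  have h2 := le_simNxt (f := f) (k := k) (simPsi k f n + 1)
  omega

lemma simPsi_injective : Function.Injective (simPsi k f) :=
  (strictMono_nat_of_lt_succ simPsi_lt).injective

end Sim

end PGState

namespace PGState

section Sim2

set_option linter.unusedSectionVars false

variable {V : Type} [Fintype V] [DecidableEq V] {G : SimpleGraph V} {c k : ℕ}
variable {f : ℕ → PGState V c}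

lemma hist_zero (f : ℕ → PGState V c) : hist f 0 = [f 0] := by
  simp [hist, List.range_succ]

lemma hist_succ (f : ℕ → PGState V c) (t : ℕ) :
    hist f (t + 1) = hist f t ++ [f (t + 1)] := by
  simp [hist, List.range_succ]

lemma ddup_cons2 {α : Type} (a b : α) (l : List α) :
    ddup (a :: b :: l) = if a = b then ddup (b :: l) else a :: ddup (b :: l) := by
  simp [ddup]

lemma M_cons (hkc : k ≤ c) (t : ℕ) :
    ∃ l, ((hist f t).map (gmap hkc)).reverse = gmap hkc (f t) :: l := by
  induction t with
  | zero => exact ⟨[], by simp [hist_zero]⟩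
  | succ t ih =>
    exact ⟨((hist f t).map (gmap hkc)).reverse, by rw [hist_succ]; simp⟩

lemma simN_zero : simN k f 0 = 0 := by simp [simN]

lemma simN_succ (t : ℕ) :
    simN k f (t + 1) = simN k f t + (if SimRel k f t then 1 else 0) := by
  rw [simN, simN, Finset.range_add_one, Finset.filter_insert]
  split
  · rw [Finset.card_insert_of_notMem (by simp)]
  · rfl

lemma main_inv (hstep : ∀ t, Step G (f t) (f (t + 1))) (hk1 : 1 ≤ k) (hkc : k ≤ c) :
    ∀ t,
      ddup (((hist f t).map (gmap hkc)).reverse)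
        = (hist (fun n => gmap hkc (f (simPsi k f n))) (simN k f t)).reverse ∧
      gmap hkc (f t) = gmap hkc (f (simPsi k f (simN k f t))) ∧
      simPsi k f (simN k f t) = simNxt k f t := by
  intro t
  induction t with
  | zero =>
    refine ⟨?_, ?_, ?_⟩
    · rw [simN_zero, hist_zero, hist_zero]
      simp only [List.map_cons, List.map_nil, List.reverse_cons, List.reverse_nil,
        List.nil_append]
      rw [show ddup [gmap hkc (f 0)] = [gmap hkc (f 0)] from by simp [ddup]]
      have h0 : simPsi k f 0 = simNxt k f 0 := rfl
      rw [h0, gmap_const_upto hstep hkc 0 (simNxt k f 0) (Nat.zero_le _) le_rfl]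
    · rw [simN_zero]
      exact (gmap_const_upto hstep hkc 0 (simPsi k f 0) (Nat.zero_le _) le_rfl).symm
    · rw [simN_zero]; rfl
  | succ t ih =>
    obtain ⟨IH1, IH2, IH3⟩ := ih
    obtain ⟨l, hl⟩ := M_cons (f := f) hkc t
    have hM1 : ((hist f (t + 1)).map (gmap hkc)).reverse
        = gmap hkc (f (t + 1)) :: gmap hkc (f t) :: l := by
      rw [hist_succ]
      simp only [List.map_append, List.map_cons, List.map_nil, List.reverse_append,
        List.reverse_cons, List.reverse_nil, List.nil_append, List.singleton_append]
      rw [hl]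
    by_cases hrel : SimRel k f t
    · -- relevant step
      have hstep' := gmap_step hstep hk1 hkc t hrel
      have hne : gmap hkc (f (t + 1)) ≠ gmap hkc (f t) := by
        intro he
        have h1 := hstep'.1
        rw [he] at h1
        have h2 : (1 : Fin (k + 1)) = 0 := by
          have := left_eq_add.mp h1
          exact this
        have h3 := congrArg Fin.val h2
        simp at h3
        omega
      have hNt : simN k f (t + 1) = simN k f t + 1 := by
        rw [simN_succ, if_pos hrel]
      have hpsit : simPsi k f (simN k f t) = t := by
        rw [IH3, simNxt_of_rel t hrel]
      have hpsi1 : simPsi k f (simN k f t + 1) = simNxt k f (t + 1) := by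
        show simNxt k f (simPsi k f (simN k f t) + 1) = _
        rw [hpsit]
      have hu1 : gmap hkc (f (simPsi k f (simN k f t + 1))) = gmap hkc (f (t + 1)) := by
        rw [hpsi1]
        exact gmap_const_upto hstep hkc (t + 1) (simNxt k f (t + 1)) (le_simNxt _) le_rfl
      refine ⟨?_, ?_, ?_⟩
      · rw [hM1, ddup_cons2, if_neg hne, ← hl, IH1, hNt, hist_succ]
        simp only [List.reverse_append, List.reverse_cons, List.reverse_nil,
          List.nil_append, List.singleton_append]
        rw [hu1]
      · rw [hNt, hu1]
      · rw [hNt, hpsi1]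
    · -- irrelevant step
      have he : gmap hkc (f (t + 1)) = gmap hkc (f t) := gmap_const hstep hkc t hrel
      have hNt : simN k f (t + 1) = simN k f t := by
        rw [simN_succ, if_neg hrel]
        omega
      refine ⟨?_, ?_, ?_⟩
      · rw [hM1, ddup_cons2, if_pos he, ← hl, IH1, hNt]
      · rw [hNt, he, IH2]
      · rw [hNt, IH3, simNxt_shift hstep t hrel]
  
lemma simN_psi (hstep : ∀ t, Step G (f t) (f (t + 1))) (hk1 : 1 ≤ k) (hkc : k ≤ c)
    (n : ℕ) : simN k f (simPsi k f n) = n := by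
  apply simPsi_injective (f := f) (k := k)
  have h3 := (main_inv hstep hk1 hkc (simPsi k f n)).2.2
  rw [h3, simNxt_of_rel _ (simPsi_rel hstep n)]

end Sim2

end PGState

namespace PGState

section Sim3

set_option linter.unusedSectionVars false

variable {V : Type} [Fintype V] [DecidableEq V] {G : SimpleGraph V} {c k : ℕ}

lemma sim_lemma (hk1 : 1 ≤ k) (hkc : k ≤ c)
    (hS : ∀ s : PGState V k, s.NonCapture → ∃ σ, IsGCP G Finset.univ σ s)
    (s : PGState V c) (hs : s.NonCapture) :
    ∃ A : Finset (Fin c), A.Nonempty ∧ ∃ σ, IsGCP G A σ s := by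
  obtain ⟨σ', hσ'⟩ := hS (gmap hkc s) (fun i hi => hs (Fin.castLE hkc i) hi)
  refine ⟨Finset.univ.filter (fun j : Fin c => (j : ℕ) < k), ?_, ?_⟩
  · exact ⟨⟨0, by omega⟩, by simp [Finset.mem_filter]; omega⟩
  · refine ⟨fun i L => if h : (i : ℕ) < k then
        σ' ⟨(i : ℕ), h⟩ ((ddup ((L.map (gmap hkc)).reverse)).reverse) else s.rob, ?_⟩
    intro f hplay hcons
    obtain ⟨hf0, hstep⟩ := hplay
    have hshift : ∀ n, gmap hkc (f (simPsi k f (n + 1)))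
        = gmap hkc (f (simPsi k f n + 1)) := by
      intro n
      show gmap hkc (f (simNxt k f (simPsi k f n + 1))) = _
      exact gmap_const_upto hstep hkc _ _ (le_simNxt _) le_rfl
    have hu0 : gmap hkc (f (simPsi k f 0)) = gmap hkc s := by
      rw [show simPsi k f 0 = simNxt k f 0 from rfl,
        gmap_const_upto hstep hkc 0 _ (Nat.zero_le _) le_rfl, hf0]
    have hplay' : IsPlay G (gmap hkc s) (fun n => gmap hkc (f (simPsi k f n))) := by
      refine ⟨hu0, ?_⟩
      intro n
      show Step G (gmap hkc (f (simPsi k f n))) (gmap hkc (f (simPsi k f (n + 1))))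
      rw [hshift n]
      exact gmap_step hstep hk1 hkc (simPsi k f n) (simPsi_rel hstep n)
    have hconsu : Consistent Finset.univ σ'
        (fun n => gmap hkc (f (simPsi k f n))) := by
      intro n h _
      set t := simPsi k f n with htdef
      have h' : min ((f t).turn : ℕ) k < k := h
      have hik : ((f t).turn : ℕ) < k := by omega
      have hic : ((f t).turn : ℕ) < c := lt_of_lt_of_le hik hkc
      have hmem : (⟨((f t).turn : ℕ), hic⟩ : Fin c)
          ∈ Finset.univ.filter (fun j : Fin c => (j : ℕ) < k) := by
        simp only [Finset.mem_filter, Finset.mem_univ, true_and]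
        exact hik
      have hbig := hcons t hic hmem
      beta_reduce at hbig
      rw [dif_pos (show ((⟨((f t).turn : ℕ), hic⟩ : Fin c) : ℕ) < k from hik)] at hbig
      have hNn : simN k f t = n := simN_psi hstep hk1 hkc n
      have hhist := (main_inv hstep hk1 hkc t).1
      rw [hhist, hNn, List.reverse_reverse] at hbig
      calc ((fun n => gmap hkc (f (simPsi k f n))) (n + 1)).cop
            ⟨(((fun n => gmap hkc (f (simPsi k f n))) n).turn : ℕ), h⟩
          = (f (t + 1)).cop ⟨((f t).turn : ℕ), hic⟩ := by
            show (gmap hkc (f (simPsi k f (n + 1)))).cop _ = _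
            rw [hshift n, gmap_cop]
            congr 1
            apply Fin.ext
            show min ((f t).turn : ℕ) k = ((f t).turn : ℕ)
            omega
        _ = σ' ⟨((f t).turn : ℕ), hik⟩
              (hist (fun n => gmap hkc (f (simPsi k f n))) n) := hbig
        _ = σ' ⟨(((fun n => gmap hkc (f (simPsi k f n))) n).turn : ℕ), h⟩
              (hist (fun n => gmap hkc (f (simPsi k f n))) n) := by
            congr 1
            apply Fin.ext
            show ((f t).turn : ℕ) = min ((f t).turn : ℕ) k
            omega
    obtain ⟨n, j, hj⟩ := hσ' _ hplay' hconsu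
    exact ⟨simPsi k f n, ⟨Fin.castLE hkc j, hj⟩⟩

lemma zero_not_mem (G : SimpleGraph V) (v : V) :
    ¬ ∀ s : PGState V 0, s.NonCapture → ∃ σ, IsGCP G Finset.univ σ s := by
  intro hS
  obtain ⟨σ, hσ⟩ := hS ⟨Fin.elim0, v, 0⟩ (fun i => i.elim0)
  obtain ⟨t, i, _⟩ := hσ (fun _ => ⟨Fin.elim0, v, 0⟩)
    ⟨rfl, fun t => ⟨@Subsingleton.elim _ Fin.subsingleton_one _ _, by
      rw [dif_neg (Nat.not_lt_zero _)]
      exact ⟨Or.inl rfl, fun j => j.elim0⟩⟩⟩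
    (fun t h => absurd h (Nat.not_lt_zero _))
  exact i.elim0

end Sim3

end PGState

/-- `c(G) > N−1` iff there exists a noncapture state `s` of the pregame `Γ̆_N(G)` (with
`N−1` cop tokens) whose state cop number is infinite. -/
theorem stmt8 {V : Type} [Fintype V] [DecidableEq V] (G : SimpleGraph V)
    (N : ℕ) (hN : 2 ≤ N) (hconn : G.Connected) :
    ((N - 1 : ℕ) : ℕ∞) < PGState.copNumber G ↔
      ∃ s : PGState V (N - 1), s.NonCapture ∧ PGState.stateCopNum G s = ⊤ := by
  constructor
  · intro hlt
    have hnot : ¬ ∀ s : PGState V (N - 1), s.NonCapture →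
        ∃ σ, PGState.IsGCP G Finset.univ σ s := by
      intro hmem
      have hle : PGState.copNumber G ≤ ((N - 1 : ℕ) : ℕ∞) :=
        sInf_le ⟨N - 1, hmem, rfl⟩
      exact absurd hle (not_le.mpr hlt)
    push_neg at hnot
    obtain ⟨s, hs, hno⟩ := hnot
    refine ⟨s, hs, ?_⟩
    rw [PGState.stateCopNum]
    convert sInf_empty
    · rfl
    rw [Set.image_eq_empty, Set.eq_empty_iff_forall_notMem]
    rintro A ⟨hA, σ, hσ⟩
    apply hno (fun i L => if i ∈ A then σ i L else s.rob)
    intro f hplay hcons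
    apply hσ f hplay
    intro t h hmem
    have hc := hcons t h (Finset.mem_univ _)
    rw [hc]
    beta_reduce
    rw [if_pos hmem]
  · rintro ⟨s, hs, htop⟩
    have hfin : ∀ A : Finset (Fin (N - 1)), A.Nonempty →
        ∀ σ, ¬ PGState.IsGCP G A σ s := by
      rintro A hA σ hσ
      have hle : PGState.stateCopNum G s ≤ (A.card : ℕ∞) :=
        sInf_le ⟨A, ⟨hA, σ, hσ⟩, rfl⟩
      rw [htop] at hle
      exact absurd (top_le_iff.mp hle) (ENat.coe_ne_top _)
    refine lt_of_lt_of_le (show ((N - 1 : ℕ) : ℕ∞) < (N : ℕ∞) from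
      Nat.cast_lt.mpr (by omega)) (le_sInf ?_)
    rintro x ⟨kk, hkk, rfl⟩
    rw [Nat.cast_le]
    by_contra hcon
    push_neg at hcon
    rcases Nat.eq_zero_or_pos kk with h0 | h1
    · subst h0
      obtain ⟨v⟩ := hconn.nonempty
      exact PGState.zero_not_mem G v hkk
    · obtain ⟨A, hA, σ, hσ⟩ :=
        PGState.sim_lemma h1 (show kk ≤ N - 1 by omega) hkk s hs
      exact hfin A hA σ hσ
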